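/- Let K be an algebraically closed field, let S and S₀ be varieties over K, let p : S₀ → S be a finite surjective morphism, let f : C → S be a proper morphism with C a separated scheme of finite type over K, and let U be an open subscheme of C. Form the fiber product C₀ = C ×_S S₀ with projection q : C₀ → C, and let U₀ = q⁻¹(U). If there exists an irreducible closed subset T₀ of the underlying space of C₀ with T₀ contained in U₀ and with Krull dimension equal to the Krull dimension of S₀, then there exists an irreducible closed subset T of the underlying space of C with T contained in U and with Krull dimension equal to the Krull dimension of S. -/

import Mathlib

open AlgebraicGeometry CategoryTheory CategoryTheory.Limits

section Auxiliary

open Order TopologicalSpace Topology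

/-- Chains lift along a surjection with the (downward) lifting property. -/
private lemma krullDim_le_of_lift' {α β : Type*} [Preorder α] [Preorder β] (f : α → β)
    (hsurj : Function.Surjective f)
    (hlift : ∀ a b', f a < b' → ∃ a', a < a' ∧ f a' = b') :
    krullDim β ≤ krullDim α := by
  have key : ∀ n (p : LTSeries β), p.length = n →
      ∃ q : LTSeries α, q.length = n ∧ f q.last = p.last := by
    intro n
    induction n with
    | zero =>
      intro p _
      obtain ⟨a, ha⟩ := hsurj p.last
      exact ⟨RelSeries.singleton _ a, rfl, ha⟩
    | succ n ih =>
      intro p hp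
      obtain ⟨q, hq, hlast⟩ := ih p.eraseLast (by simp [hp])
      have hlt : f q.last < p.last := by
        rw [hlast]
        exact p.eraseLast_last_rel_last (by omega)
      obtain ⟨a', ha', hfa'⟩ := hlift _ _ hlt
      exact ⟨q.snoc a' ha', by simp [hq], by simpa⟩
  rw [krullDim, krullDim]
  apply iSup_le
  intro p
  obtain ⟨q, hq, -⟩ := key p.length p rfl
  calc (p.length : WithBot ℕ∞) = q.length := by rw [hq]
    _ ≤ _ := le_iSup (fun (r : LTSeries α) => (r.length : WithBot ℕ∞)) q

private lemma specializes_subtype_of_specializes' {X : Type*} [TopologicalSpace X] {s : Set X}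
    {x y : s} (h : (x : X) ⤳ (y : X)) : x ⤳ y := by
  rw [specializes_iff_forall_open] at h ⊢
  intro t ht hyt
  obtain ⟨v, hv, rfl⟩ := isOpen_induced_iff.mp ht
  exact h v hv hyt

/-- If `g : X → Y` is a continuous specializing surjection between sober spaces which is
injective on specializations within fibers, then the Krull dimensions agree. -/
private lemma topologicalKrullDim_eq_of_specializingMap' {X Y : Type*}
    [TopologicalSpace X] [TopologicalSpace Y]
    [QuasiSober X] [QuasiSober Y] [T0Space X] [T0Space Y]
    {g : X → Y} (hcont : Continuous g) (hspec : SpecializingMap g)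
    (hsurj : Function.Surjective g)
    (hfib : ∀ x x', x ⤳ x' → g x = g x' → x = x') :
    topologicalKrullDim X = topologicalKrullDim Y := by
  letI : PartialOrder X := specializationOrder X
  letI : PartialOrder Y := specializationOrder Y
  have hX : topologicalKrullDim X = krullDim X :=
    krullDim_eq_of_orderIso irreducibleSetEquivPoints
  have hY : topologicalKrullDim Y = krullDim Y :=
    krullDim_eq_of_orderIso irreducibleSetEquivPoints
  rw [hX, hY]
  have hmono : ∀ {x x' : X}, x ≤ x' → g x ≤ g x' := fun h => h.map hcont
  have hsm : StrictMono g := by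
    intro x x' hlt
    refine lt_of_le_of_ne (hmono hlt.le) ?_
    intro he
    exact hlt.ne (hfib x' x hlt.le he.symm).symm
  have h1 : krullDim X ≤ krullDim Y := krullDim_le_of_strictMono g hsm
  have h2 : krullDim Yᵒᵈ ≤ krullDim Xᵒᵈ := by
    apply krullDim_le_of_lift' (α := Xᵒᵈ) (β := Yᵒᵈ) g hsurj
    intro a b' hab
    have hd : g (OrderDual.ofDual a) ⤳ (OrderDual.ofDual b') := hab.le
    obtain ⟨a', ha', hga'⟩ := hspec hd
    refine ⟨OrderDual.toDual a', ?_, hga'⟩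
    refine lt_of_le_of_ne ha' ?_
    intro he
    apply hab.ne
    have h3 : a' = OrderDual.ofDual a := congrArg OrderDual.ofDual he.symm
    have h4 : g (OrderDual.ofDual a) = OrderDual.ofDual b' := by rw [← h3]; exact hga'
    exact h4
  have h2' : krullDim Y ≤ krullDim X := by
    rwa [krullDim_orderDual (α := Y), krullDim_orderDual (α := X)] at h2
  exact le_antisymm h1 h2'

private lemma PrimeSpectrum.specializingMap_comap_of_isIntegral' {R S : Type*}
    [CommRing R] [CommRing S] (φ : R →+* S) (hφ : φ.IsIntegral) :
    SpecializingMap (PrimeSpectrum.comap φ) := by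
  letI := φ.toAlgebra
  haveI : Algebra.IsIntegral R S := ⟨hφ⟩
  intro p y' h
  have hle : (PrimeSpectrum.comap φ p).asIdeal ≤ y'.asIdeal :=
    (PrimeSpectrum.le_iff_specializes _ _).mpr h
  haveI := y'.isPrime
  obtain ⟨Q, hQ, hQprime, hcomap⟩ :=
    Ideal.exists_ideal_over_prime_of_isIntegral y'.asIdeal p.asIdeal hle
  exact ⟨⟨Q, hQprime⟩, (PrimeSpectrum.le_iff_specializes p ⟨Q, hQprime⟩).mp hQ,
    PrimeSpectrum.ext hcomap⟩

private lemma PrimeSpectrum.eq_of_specializes_of_comap_eq' {R S : Type*}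
    [CommRing R] [CommRing S]
    (φ : R →+* S) (hφ : φ.IsIntegral) {p q : PrimeSpectrum S} (h : p ⤳ q)
    (he : PrimeSpectrum.comap φ p = PrimeSpectrum.comap φ q) : p = q := by
  letI := φ.toAlgebra
  have hle : p.asIdeal ≤ q.asIdeal := (PrimeSpectrum.le_iff_specializes _ _).mpr h
  by_contra hne
  have hlt : p.asIdeal < q.asIdeal :=
    lt_of_le_of_ne hle (fun hh => hne (PrimeSpectrum.ext hh))
  obtain ⟨-, x, hxq, hxp⟩ := SetLike.lt_iff_le_and_exists.mp hlt
  haveI := p.isPrime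
  have := Ideal.comap_lt_comap_of_integral_mem_sdiff (R := R) hle ⟨hxq, hxp⟩ (hφ x)
  rw [show (algebraMap R S) = φ from rfl] at this
  exact this.ne congr(($he).asIdeal)

private lemma Scheme.iso_hom_inv_base_apply' {X Y : Scheme} (e : X ≅ Y) (a : X) :
    e.inv.base (e.hom.base a) = a := by
  rw [← Scheme.Hom.comp_apply, e.hom_inv_id]
  rfl

private lemma Scheme.iso_hom_base_injective' {X Y : Scheme} (e : X ≅ Y) :
    Function.Injective e.hom.base := by
  intro a b h
  have h2 := congrArg e.inv.base h
  rwa [Scheme.iso_hom_inv_base_apply', Scheme.iso_hom_inv_base_apply'] at h2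

variable {X Y : Scheme} (g : X ⟶ Y) [AlgebraicGeometry.IsIntegralHom g]

/-- Integral morphisms of schemes are specializing (going-up). -/
private lemma AlgebraicGeometry.IsIntegralHom.specializingMap' :
    SpecializingMap g.base := by
  intro x y' hspec
  obtain ⟨_, ⟨V, hV, rfl⟩, hy'V, -⟩ := Y.isBasis_affineOpens.exists_subset_of_mem_open
      (Set.mem_univ y') isOpen_univ
  haveI : AlgebraicGeometry.IsIntegralHom (g ∣_ V) := inferInstance
  haveI : IsAffine (V : Scheme) := hV
  haveI : IsAffine ((g ⁻¹ᵁ V) : Scheme) := hV.preimage g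
  have hφ : RingHom.IsIntegral ((g ∣_ V).appTop.hom) :=
    (g ∣_ V).isIntegral_app ⊤ (isAffineOpen_top _)
  set eU := Scheme.isoSpec ((g ⁻¹ᵁ V) : Scheme) with heU
  set eV := Scheme.isoSpec (V : Scheme) with heV
  have hnat : ∀ u, (PrimeSpectrum.comap ((g ∣_ V).appTop.hom)) (eU.hom.base u)
      = eV.hom.base ((g ∣_ V).base u) := by
    intro u
    show (eU.hom ≫ Spec.map ((g ∣_ V).appTop)).base u = ((g ∣_ V) ≫ eV.hom).base u
    rw [Scheme.isoSpec_hom_naturality]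
  have hgxV : g.base x ∈ V := specializes_iff_forall_open.mp hspec _ V.isOpen hy'V
  set xt : ↥(g ⁻¹ᵁ V) := ⟨x, hgxV⟩ with hxt
  set y't : ↥V := ⟨y', hy'V⟩ with hy't
  have hiU : ∀ z : ↥(g ⁻¹ᵁ V), ((g ⁻¹ᵁ V).ι).base z = z.1 := fun _ => rfl
  have hiV : ∀ z : ↥V, (Scheme.Opens.ι V).base z = z.1 := fun _ => rfl
  have hres : ∀ z : ↥(g ⁻¹ᵁ V), ((g ∣_ V).base z).1 = g.base z.1 := fun z =>
    morphismRestrict_base_coe g V z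
  have h1 : (g ∣_ V).base xt ⤳ y't := by
    apply (Scheme.Opens.ι V).isOpenEmbedding.isInducing.specializes_iff.mp
    erw [hiV, hiV, hres]
    exact hspec
  have h2 : PrimeSpectrum.comap ((g ∣_ V).appTop.hom) (eU.hom.base xt) ⤳ eV.hom.base y't := by
    rw [hnat xt]
    exact h1.map eV.hom.continuous
  obtain ⟨q, hq1, hq2⟩ := PrimeSpectrum.specializingMap_comap_of_isIntegral' _ hφ h2
  set x't : ↥(g ⁻¹ᵁ V) := eU.inv.base q with hx't
  have hq : eU.hom.base x't = q := by
    erw [hx't, ← Scheme.Hom.comp_apply, eU.inv_hom_id]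
    simp
    rfl
  have hxx' : xt ⤳ x't := by
    have h3 := hq1.map eU.inv.continuous
    erw [Scheme.iso_hom_inv_base_apply'] at h3
    exact h3
  have hgx' : (g ∣_ V).base x't = y't := by
    apply Scheme.iso_hom_base_injective' eV
    rw [← hnat x't, hq, hq2]
  refine ⟨x't.1, ?_, ?_⟩
  · have := hxx'.map ((g ⁻¹ᵁ V).ι).continuous
    rwa [hiU, hiU] at this
  · rw [← hres x't, hgx']

/-- An integral morphism of schemes admits no nontrivial specializations within fibers. -/
private lemma AlgebraicGeometry.IsIntegralHom.eq_of_specializes'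
    {x x' : X} (h : x ⤳ x') (he : g.base x = g.base x') : x = x' := by
  obtain ⟨_, ⟨V, hV, rfl⟩, hy'V, -⟩ := Y.isBasis_affineOpens.exists_subset_of_mem_open
      (Set.mem_univ (g.base x')) isOpen_univ
  haveI : AlgebraicGeometry.IsIntegralHom (g ∣_ V) := inferInstance
  haveI : IsAffine (V : Scheme) := hV
  haveI : IsAffine ((g ⁻¹ᵁ V) : Scheme) := hV.preimage g
  have hφ : RingHom.IsIntegral ((g ∣_ V).appTop.hom) :=
    (g ∣_ V).isIntegral_app ⊤ (isAffineOpen_top _)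
  set eU := Scheme.isoSpec ((g ⁻¹ᵁ V) : Scheme) with heU
  set eV := Scheme.isoSpec (V : Scheme) with heV
  have hnat : ∀ u, (PrimeSpectrum.comap ((g ∣_ V).appTop.hom)) (eU.hom.base u)
      = eV.hom.base ((g ∣_ V).base u) := by
    intro u
    show (eU.hom ≫ Spec.map ((g ∣_ V).appTop)).base u = ((g ∣_ V) ≫ eV.hom).base u
    rw [Scheme.isoSpec_hom_naturality]
  have hx'V : g.base x' ∈ V := hy'V
  have hxV : g.base x ∈ V := by rw [he]; exact hy'V
  set xt : ↥(g ⁻¹ᵁ V) := ⟨x, hxV⟩ with hxt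
  set x't : ↥(g ⁻¹ᵁ V) := ⟨x', hx'V⟩ with hx't
  have hiU : ∀ z : ↥(g ⁻¹ᵁ V), ((g ⁻¹ᵁ V).ι).base z = z.1 := fun _ => rfl
  have hres : ∀ z : ↥(g ⁻¹ᵁ V), ((g ∣_ V).base z).1 = g.base z.1 := fun z =>
    morphismRestrict_base_coe g V z
  have h1 : xt ⤳ x't := by
    apply ((g ⁻¹ᵁ V).ι).isOpenEmbedding.isInducing.specializes_iff.mp
    rw [hiU, hiU]
    exact h
  have h2 : eU.hom.base xt ⤳ eU.hom.base x't := h1.map eU.hom.continuous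
  have h3 : PrimeSpectrum.comap ((g ∣_ V).appTop.hom) (eU.hom.base xt)
      = PrimeSpectrum.comap ((g ∣_ V).appTop.hom) (eU.hom.base x't) := by
    erw [hnat, hnat]
    congr 1
    apply Subtype.ext
    rw [hres, hres]
    exact he
  have h4 := PrimeSpectrum.eq_of_specializes_of_comap_eq' _ hφ h2 h3
  have h5 : xt = x't := Scheme.iso_hom_base_injective' eU h4
  exact congrArg Subtype.val h5

end Auxiliary

/-- A variety over `K`: an integral scheme, separated and of finite type over `K`
(with respect to the given structure morphism). -/
def IsVarietyOver (K : Type) [Field K] (X : Scheme)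
    (sX : X ⟶ AlgebraicGeometry.Spec (CommRingCat.of K)) : Prop :=
  IsIntegral X ∧ IsSeparated sX ∧ LocallyOfFiniteType sX ∧ QuasiCompact sX

/-- A 'new section datum' (an irreducible closed subset of the total space,
inside a given open, of the dimension of the base) descends along a finite surjective base
change `p : S₀ ⟶ S`. Here `C₀ = C ×_S S₀` and `q : C₀ ⟶ C` is the first projection. -/
theorem new_section_descends_along_finite_surjective_base_change
    (K : Type) [Field K] [IsAlgClosed K]
    (S S₀ C : Scheme)
    (sS : S ⟶ Spec (CommRingCat.of K)) (sS₀ : S₀ ⟶ Spec (CommRingCat.of K))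
    (sC : C ⟶ Spec (CommRingCat.of K))
    (hS : IsVarietyOver K S sS) (hS₀ : IsVarietyOver K S₀ sS₀)
    (hCsep : IsSeparated sC) (hClft : LocallyOfFiniteType sC) (hCqc : QuasiCompact sC)
    (p : S₀ ⟶ S) (hpfin : IsFinite p) (hpsurj : Surjective p)
    (f : C ⟶ S) (hfprop : IsProper f)
    (U : C.Opens)
    (hT₀ : ∃ T₀ : Set ↥(pullback f p), IsIrreducible T₀ ∧ IsClosed T₀ ∧
      T₀ ⊆ (pullback.fst f p).base ⁻¹' (U : Set C) ∧
      topologicalKrullDim ↥T₀ = topologicalKrullDim S₀) :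
    ∃ T : Set C, IsIrreducible T ∧ IsClosed T ∧ T ⊆ (U : Set C) ∧
      topologicalKrullDim T = topologicalKrullDim S := by

  classical
  obtain ⟨T₀, hirr, hcl, hsub, hdim⟩ := hT₀
  set q : pullback f p ⟶ C := pullback.fst f p with hqdef
  haveI hqfin : IsFinite q := by haveI := hpfin; exact inferInstanceAs (IsFinite (pullback.fst f p))
  have hqspec : SpecializingMap q.base := AlgebraicGeometry.IsIntegralHom.specializingMap' q
  have hqclosed : IsClosedMap q.base := (isClosedMap_iff_specializingMap q).mpr hqspec
  set T : Set C := q.base '' T₀ with hTdef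
  have hTirr : IsIrreducible T := hirr.image _ q.continuous.continuousOn
  have hTcl : IsClosed T := hqclosed _ hcl
  have hTsub : T ⊆ (U : Set C) := by
    rintro - ⟨z, hz, rfl⟩
    exact hsub hz
  refine ⟨T, hTirr, hTcl, hTsub, ?_⟩
  -- sobriety instances for the subspaces
  haveI : QuasiSober ↥T₀ := hcl.isClosedEmbedding_subtypeVal.quasiSober
  haveI : QuasiSober ↥T := hTcl.isClosedEmbedding_subtypeVal.quasiSober
  -- the restriction of `q` to `T₀ → T`
  set g : ↥T₀ → ↥T := fun z => ⟨q.base z.1, Set.mem_image_of_mem _ z.2⟩ with hgdef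
  have hgc : Continuous g := Continuous.subtype_mk (q.continuous.comp continuous_subtype_val) _
  have hgs : SpecializingMap g := by
    intro z y' hzy
    have h1 : q.base z.1 ⤳ y'.1 := hzy.map continuous_subtype_val
    obtain ⟨w, hw1, hw2⟩ := hqspec h1
    have hwT₀ : w ∈ T₀ := hcl.stableUnderSpecialization hw1 z.2
    refine ⟨⟨w, hwT₀⟩, specializes_subtype_of_specializes' hw1, Subtype.ext hw2⟩
  have hgsurj : Function.Surjective g := by
    rintro ⟨-, z, hz, rfl⟩
    exact ⟨⟨z, hz⟩, rfl⟩
  have hgfib : ∀ z z' : ↥T₀, z ⤳ z' → g z = g z' → z = z' := by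
    intro z z' hs he
    exact Subtype.ext (AlgebraicGeometry.IsIntegralHom.eq_of_specializes' q
      (hs.map continuous_subtype_val) (congrArg Subtype.val he))
  have e1 : topologicalKrullDim ↥T₀ = topologicalKrullDim ↥T :=
    topologicalKrullDim_eq_of_specializingMap' hgc hgs hgsurj hgfib
  have e2 : topologicalKrullDim S₀ = topologicalKrullDim S := by
    refine topologicalKrullDim_eq_of_specializingMap' p.continuous
      (AlgebraicGeometry.IsIntegralHom.specializingMap' p) hpsurj.surj ?_
    intro x x' hs he
    exact AlgebraicGeometry.IsIntegralHom.eq_of_specializes' p hs he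
  rw [← e1, hdim, e2]
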